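/- Let U be a set of 2^m distinct nonzero vectors in F_2^n, let B : F_2^n → F_2^m be a uniformly random linear map, fix y ∈ F_2^m, and define Z_y = |{u ∈ U : B u = y}|. Then for every integer a ≥ 1, Pr[Z_y > 2^a - 2] ≤ γ^{-1} 2^{-a^2}, where γ = ∏_{j=1}^∞ (1 - 2^{-j}). -/

import Mathlib

/-- The space of F_2-linear maps from F_2^n to F_2^m. -/
abbrev Lin (n m : ℕ) := (Fin n → ZMod 2) →ₗ[ZMod 2] (Fin m → ZMod 2)

/-- γ = ∏_{j=1}^∞ (1 - 2^{-j}). -/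
noncomputable def gammaProd : ℝ := ∏' j : ℕ, (1 - (2 : ℝ)⁻¹ ^ (j + 1))

open Finset

private lemma arith1 (a k : ℕ) (h : k < a) : a - 1 - k + 1 = a - k := by omega



lemma fpos : ∀ j : ℕ, 0 < 1 - (2 : ℝ)⁻¹ ^ (j + 1) := by
  intro j
  have h1 : (2 : ℝ)⁻¹ ^ (j + 1) ≤ (2:ℝ)⁻¹ ^ 1 := by
    apply pow_le_pow_of_le_one (by norm_num) (by norm_num) (by omega)
  norm_num at h1 ⊢; linarith

lemma logsummable : Summable fun j : ℕ => Real.log (1 - (2 : ℝ)⁻¹ ^ (j + 1)) := by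
  rw [← summable_neg_iff]
  apply Summable.of_nonneg_of_le (g := fun j => -Real.log (1 - (2:ℝ)⁻¹ ^ (j+1)))
    (f := fun j => 2 * (2:ℝ)⁻¹ ^ (j+1))
  · intro j
    simp only [neg_nonneg]
    apply Real.log_nonpos (le_of_lt (fpos j))
    have : (0:ℝ) < (2:ℝ)⁻¹ ^ (j+1) := by positivity
    linarith
  · intro j
    have hx : (2:ℝ)⁻¹ ^ (j + 1) ≤ (2:ℝ)⁻¹ := by
      have := pow_le_pow_of_le_one (by norm_num : (0:ℝ) ≤ 2⁻¹) (by norm_num : (2:ℝ)⁻¹ ≤ 1)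
        (by omega : 1 ≤ j + 1)
      simpa using this
    set x := (2:ℝ)⁻¹ ^ (j+1) with hxdef
    have hx0 : 0 < x := by positivity
    have h1 : 0 < 1 - x := fpos j
    have : -Real.log (1 - x) = Real.log (1-x)⁻¹ := by rw [Real.log_inv]
    rw [this]
    have h2 : Real.log (1-x)⁻¹ ≤ (1-x)⁻¹ - 1 := Real.log_le_sub_one_of_pos (by positivity)
    have h3 : (1-x)⁻¹ - 1 = x / (1-x) := by field_simp; ring
    have h4 : x / (1-x) ≤ 2 * x := by
      rw [div_le_iff₀ h1]; nlinarith
    linarith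
  · apply Summable.mul_left
    apply Summable.comp_injective (f := fun k : ℕ => (2:ℝ)⁻¹ ^ k)
      (summable_geometric_of_lt_one (by norm_num) (by norm_num)) (add_left_injective 1)

lemma gamma_multipliable : Multipliable fun j : ℕ => (1 - (2 : ℝ)⁻¹ ^ (j + 1)) := by
  exact Real.multipliable_of_summable_log fpos logsummable

lemma gamma_pos : 0 < gammaProd := by
  have := Real.rexp_tsum_eq_tprod fpos logsummable
  rw [gammaProd, ← this]
  exact Real.exp_pos _

lemma gamma_le_partial' (a : ℕ) : gammaProd ≤ ∏ j ∈ Finset.range a, (1 - (2 : ℝ)⁻¹ ^ (j + 1)) := by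
  have hlogshift : Summable fun j : ℕ => Real.log (1 - (2:ℝ)⁻¹ ^ (j + a + 1)) :=
    logsummable.comp_injective (add_left_injective a)
  have htail : Multipliable fun j : ℕ => (1 - (2 : ℝ)⁻¹ ^ (j + a + 1)) :=
    Real.multipliable_of_summable_log (fun j => fpos (j + a)) hlogshift
  have key := Multipliable.prod_mul_tprod_nat_mul' (f := fun j => 1 - (2:ℝ)⁻¹ ^ (j+1)) (k := a) htail
  have hT : (∏' i : ℕ, (1 - (2:ℝ)⁻¹ ^ (i + a + 1))) ≤ 1 := by
    have hexp := Real.rexp_tsum_eq_tprod (f := fun j => 1 - (2:ℝ)⁻¹ ^ (j + a + 1))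
      (fun j => fpos (j + a)) hlogshift
    rw [← hexp, Real.exp_le_one_iff]
    apply tsum_nonpos
    intro j
    apply Real.log_nonpos (le_of_lt (fpos (j + a)))
    have : (0:ℝ) < (2:ℝ)⁻¹ ^ (j + a + 1) := by positivity
    linarith
  have hP : (0:ℝ) ≤ ∏ j ∈ Finset.range a, (1 - (2 : ℝ)⁻¹ ^ (j + 1)) :=
    Finset.prod_nonneg (fun j _ => (fpos j).le)
  rw [gammaProd, ← key]
  calc (∏ j ∈ Finset.range a, (1 - (2 : ℝ)⁻¹ ^ (j + 1))) * ∏' i : ℕ, (1 - (2:ℝ)⁻¹ ^ ((i + a) + 1))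
      ≤ (∏ j ∈ Finset.range a, (1 - (2 : ℝ)⁻¹ ^ (j + 1))) * 1 := mul_le_mul_of_nonneg_left hT hP
    _ = _ := mul_one _




noncomputable instance linFintype (n m : ℕ) : Fintype (Lin n m) :=
  Fintype.ofInjective (fun B => (B : (Fin n → ZMod 2) → (Fin m → ZMod 2)))
    (fun _ _ h => LinearMap.ext (congrFun h))

lemma exists_map (n m a : ℕ) (u : Fin a → (Fin n → ZMod 2))
    (hu : LinearIndependent (ZMod 2) u) (t : Fin a → (Fin m → ZMod 2)) :
    ∃ B : Lin n m, ∀ i, B (u i) = t i := by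
  classical
  have hs : LinearIndepOn (ZMod 2) id (Set.range u) :=
    (linearIndepOn_id_range_iff hu.injective).mpr hu
  let b := Module.Basis.extend hs
  set g : ↥(hs.extend (Set.subset_univ _)) → (Fin m → ZMod 2) :=
    fun x => if h : ∃ i, u i = (x : Fin n → ZMod 2) then t h.choose else 0 with hg
  refine ⟨b.constr (ZMod 2) g, fun i => ?_⟩
  have hmem : u i ∈ hs.extend (Set.subset_univ _) :=
    hs.subset_extend _ ⟨i, rfl⟩
  have hbase : u i = b ⟨u i, hmem⟩ := (Module.Basis.extend_apply_self hs ⟨u i, hmem⟩).symm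
  rw [hbase, Module.Basis.constr_basis]
  have hex : ∃ j, u j = ((⟨u i, hmem⟩ : ↥(hs.extend (Set.subset_univ _))) :
      Fin n → ZMod 2) := ⟨i, rfl⟩
  simp only [hg, dif_pos hex]
  exact congrArg t (hu.injective hex.choose_spec)

lemma fiber_bound (n m a : ℕ) (y : Fin m → ZMod 2) (u : Fin a → (Fin n → ZMod 2))
    (hu : LinearIndependent (ZMod 2) u) :
    (univ.filter (fun B : Lin n m => ∀ i, B (u i) = y)).card * (2^m)^a
      ≤ Fintype.card (Lin n m) := by
  classical
  have hcard : Fintype.card (Lin n m)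
      = ∑ t : Fin a → (Fin m → ZMod 2),
          (univ.filter (fun B : Lin n m => (fun i => B (u i)) = t)).card := by
    rw [← Finset.card_univ]
    exact Finset.card_eq_sum_card_fiberwise (fun B _ => Finset.mem_univ _)
  have hle : ∀ t : Fin a → (Fin m → ZMod 2),
      (univ.filter (fun B : Lin n m => ∀ i, B (u i) = y)).card
        ≤ (univ.filter (fun B : Lin n m => (fun i => B (u i)) = t)).card := by
    intro t
    obtain ⟨Bt, hBt⟩ := exists_map n m a u hu t
    obtain ⟨By, hBy⟩ := exists_map n m a u hu (fun _ => y)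
    apply Finset.card_le_card_of_injOn (fun B => B - By + Bt)
    · intro B hB
      simp only [Finset.coe_filter, Set.mem_setOf_eq, Finset.mem_filter, Finset.mem_univ, true_and] at hB ⊢
      funext i
      simp [LinearMap.sub_apply, LinearMap.add_apply, hB i, hBy i, hBt i]
    · intro B1 _ B2 _ h
      have := congrArg (fun C : Lin n m => C - Bt + By) h
      simpa using this
  have hcount : Fintype.card (Fin a → (Fin m → ZMod 2)) = (2^m)^a := by
    simp [Fintype.card_fun, ZMod.card]
  calc (univ.filter (fun B : Lin n m => ∀ i, B (u i) = y)).card * (2^m)^a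
      = ∑ _t : Fin a → (Fin m → ZMod 2),
          (univ.filter (fun B : Lin n m => ∀ i, B (u i) = y)).card := by
        rw [Finset.sum_const, Finset.card_univ, hcount, smul_eq_mul, mul_comm]
    _ ≤ ∑ t : Fin a → (Fin m → ZMod 2),
          (univ.filter (fun B : Lin n m => (fun i => B (u i)) = t)).card :=
        Finset.sum_le_sum (fun t _ => hle t)
    _ = Fintype.card (Lin n m) := hcard.symm


open scoped Classical in
set_option maxHeartbeats 800000 in
lemma tuple_count (n a : ℕ) (S : Finset (Fin n → ZMod 2)) (h0 : (0 : Fin n → ZMod 2) ∉ S)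
    (hS : 2 ^ a - 1 ≤ S.card) :
    ∀ j ≤ a, ∏ k ∈ Finset.range j, (2 ^ a - 2 ^ k) ≤
      (univ.filter (fun u : Fin j → (Fin n → ZMod 2) =>
        (∀ i, u i ∈ S) ∧ LinearIndependent (ZMod 2) u)).card := by
  classical
  intro j
  induction j with
  | zero =>
    intro _
    simp only [Finset.range_zero, Finset.prod_empty]
    rw [Nat.one_le_iff_ne_zero, ← Nat.pos_iff_ne_zero, Finset.card_pos]
    refine ⟨fun i => i.elim0, ?_⟩
    simp only [Finset.mem_filter, Finset.mem_univ, true_and]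
    exact ⟨fun i => i.elim0, linearIndependent_empty_type⟩
  | succ j ih =>
    intro hj
    have hj' : j ≤ a := by omega
    have hja : j < a := by omega
    set A : ∀ jj : ℕ, Finset (Fin jj → (Fin n → ZMod 2)) := fun jj => univ.filter
      (fun u : Fin jj → (Fin n → ZMod 2) => (∀ i, u i ∈ S) ∧ LinearIndependent (ZMod 2) u) with hA
    set img : (Fin j → (Fin n → ZMod 2)) → Finset (Fin n → ZMod 2) :=
      fun v => Finset.image (fun c : Fin j → ZMod 2 => ∑ i, c i • v i) univ with himg
    -- the sigma set injects into A (j+1)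
    have hinj : ∀ p ∈ (A j).sigma (fun v => S \ img v), ∀ q ∈ (A j).sigma (fun v => S \ img v),
        (Fin.snoc p.1 p.2 : Fin (j+1) → (Fin n → ZMod 2)) = Fin.snoc q.1 q.2 → p = q := by
      rintro ⟨v1, w1⟩ _ ⟨v2, w2⟩ _ h
      have hv : v1 = v2 := by
        funext i
        have := congrFun h (Fin.castSucc i)
        simpa [Fin.snoc_castSucc] using this
      have hw : w1 = w2 := by
        have := congrFun h (Fin.last j)
        simpa [Fin.snoc_last] using this
      subst hv; subst hw; rfl
    have hmaps : ∀ p ∈ (A j).sigma (fun v => S \ img v),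
        (Fin.snoc p.1 p.2 : Fin (j+1) → (Fin n → ZMod 2)) ∈ A (j+1) := by
      rintro ⟨v, w⟩ hp
      rw [Finset.mem_sigma] at hp
      obtain ⟨hv, hw⟩ := hp
      rw [hA] at hv ⊢
      simp only [Finset.mem_filter, Finset.mem_univ, true_and] at hv ⊢
      rw [Finset.mem_sdiff] at hw
      constructor
      · intro i
        refine Fin.lastCases ?_ ?_ i
        · rw [Fin.snoc_last]; exact hw.1
        · intro k; rw [Fin.snoc_castSucc]; exact hv.1 k
      · rw [linearIndependent_fin_snoc]
        refine ⟨hv.2, fun hsp => ?_⟩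
        obtain ⟨c, hc⟩ := (Submodule.mem_span_range_iff_exists_fun (ZMod 2)).1 hsp
        exact hw.2 (Finset.mem_image.2 ⟨c, Finset.mem_univ c, hc⟩)
    have hcard1 : ((A j).sigma (fun v => S \ img v)).card ≤ (A (j+1)).card :=
      Finset.card_le_card_of_injOn _ hmaps hinj
    have hlow : ∀ v : Fin j → (Fin n → ZMod 2), 2 ^ a - 2 ^ j ≤ (S \ img v).card := by
      intro v
      have himgcard : (img v).card ≤ 2 ^ j := by
        calc (img v).card ≤ Fintype.card (Fin j → ZMod 2) := by
              rw [← Finset.card_univ]; exact Finset.card_image_le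
          _ = 2 ^ j := by simp [ZMod.card]
      have h0img : (0 : Fin n → ZMod 2) ∈ img v := Finset.mem_image.2 ⟨0, Finset.mem_univ _, by simp⟩
      have hsub : S ⊆ (S \ img v) ∪ (img v).erase 0 := by
        intro x hx
        by_cases hxi : x ∈ img v
        · exact Finset.mem_union_right _ (Finset.mem_erase.2
            ⟨fun h => h0 (h ▸ hx), hxi⟩)
        · exact Finset.mem_union_left _ (Finset.mem_sdiff.2 ⟨hx, hxi⟩)
      have h1 : S.card ≤ (S \ img v).card + ((img v).erase 0).card :=
        (Finset.card_le_card hsub).trans (Finset.card_union_le _ _)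
      have h2 : ((img v).erase 0).card = (img v).card - 1 := Finset.card_erase_of_mem h0img
      have h3 : 2 ^ j ≤ 2 ^ a := Nat.pow_le_pow_right (by norm_num) hj'
      have h4 : 1 ≤ (img v).card := Finset.card_pos.2 ⟨0, h0img⟩
      clear hA himg hinj hmaps hcard1 ih h0img hsub
      omega
    calc ∏ k ∈ Finset.range (j+1), (2 ^ a - 2 ^ k)
        = (∏ k ∈ Finset.range j, (2 ^ a - 2 ^ k)) * (2 ^ a - 2 ^ j) :=
          Finset.prod_range_succ _ _
      _ ≤ (A j).card * (2 ^ a - 2 ^ j) := Nat.mul_le_mul_right _ (ih hj')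
      _ = ∑ _v ∈ A j, (2 ^ a - 2 ^ j) := by rw [Finset.sum_const, smul_eq_mul, mul_comm]
      _ ≤ ∑ v ∈ A j, (S \ img v).card := Finset.sum_le_sum (fun v _ => hlow v)
      _ = ((A j).sigma (fun v => S \ img v)).card := (Finset.card_sigma _ _).symm
      _ ≤ (A (j+1)).card := hcard1

/-- Let U be a set of 2^m distinct nonzero vectors in F_2^n, let B : F_2^n → F_2^m
be a uniformly random linear map, fix y ∈ F_2^m, and define Z_y = |{u ∈ U : B u = y}|.
Then for every integer a ≥ 1, Pr[Z_y > 2^a - 2] ≤ γ^{-1} 2^{-a^2},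
where γ = ∏_{j=1}^∞ (1 - 2^{-j}). -/
theorem stmt_2 (n m : ℕ) (U : Finset (Fin n → ZMod 2))
    (hUcard : U.card = 2 ^ m) (hU0 : (0 : Fin n → ZMod 2) ∉ U)
    (y : Fin m → ZMod 2) (a : ℕ) (ha : 1 ≤ a) :
    (Nat.card {B : Lin n m // 2 ^ a - 2 < (U.filter (fun x => B x = y)).card} : ℝ) /
        (Nat.card (Lin n m) : ℝ) ≤
      gammaProd⁻¹ * ((2 : ℝ) ^ (a ^ 2))⁻¹ := by
  classical
  set L := Fintype.card (Lin n m) with hLdef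
  set N := ∏ k ∈ Finset.range a, (2 ^ a - 2 ^ k) with hNdef
  set bad := univ.filter
    (fun B : Lin n m => 2 ^ a - 2 < (U.filter (fun x => B x = y)).card) with hbad
  have hnum : Nat.card {B : Lin n m //
      2 ^ a - 2 < (U.filter (fun x => B x = y)).card} = bad.card := by
    rw [Nat.card_eq_fintype_card, Fintype.card_subtype]
  have hden : Nat.card (Lin n m) = L := Nat.card_eq_fintype_card
  set T : Lin n m → Finset (Fin a → (Fin n → ZMod 2)) := fun B => univ.filter
      (fun u : Fin a → (Fin n → ZMod 2) =>
        (∀ i, u i ∈ U.filter (fun x => B x = y)) ∧ LinearIndependent (ZMod 2) u) with hT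
  have h2a : 2 ≤ 2 ^ a := by
    calc 2 = 2 ^ 1 := (pow_one 2).symm
    _ ≤ 2 ^ a := Nat.pow_le_pow_right (by norm_num) ha
  -- Step A: each bad B admits many independent tuples
  have hbadN : ∀ B ∈ bad, N ≤ (T B).card := by
    intro B hB
    rw [hbad, Finset.mem_filter] at hB
    exact tuple_count n a (U.filter (fun x => B x = y))
      (fun hmem => hU0 (Finset.mem_filter.1 hmem).1) (by omega) a le_rfl
  -- Step B: double counting
  have hswap : ∑ B : Lin n m, (T B).card
      = ∑ u : Fin a → (Fin n → ZMod 2), (univ.filter (fun B : Lin n m =>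
          (∀ i, u i ∈ U.filter (fun x => B x = y)) ∧ LinearIndependent (ZMod 2) u)).card := by
    simp only [hT, Finset.card_filter]
    exact Finset.sum_comm
  have key1 : ∀ u : Fin a → (Fin n → ZMod 2),
      (univ.filter (fun B : Lin n m =>
          (∀ i, u i ∈ U.filter (fun x => B x = y)) ∧ LinearIndependent (ZMod 2) u)).card
        * (2 ^ m) ^ a ≤ (if ∀ i, u i ∈ U then L else 0) := by
    intro u
    by_cases hU : ∀ i, u i ∈ U
    · rw [if_pos hU]
      by_cases hind : LinearIndependent (ZMod 2) u
      · calc (univ.filter (fun B : Lin n m =>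
              (∀ i, u i ∈ U.filter (fun x => B x = y)) ∧ LinearIndependent (ZMod 2) u)).card
              * (2 ^ m) ^ a
            ≤ (univ.filter (fun B : Lin n m => ∀ i, B (u i) = y)).card * (2 ^ m) ^ a := by
              apply Nat.mul_le_mul_right
              apply Finset.card_le_card
              intro B hB
              rw [Finset.mem_filter] at hB ⊢
              exact ⟨hB.1, fun i => (Finset.mem_filter.1 (hB.2.1 i)).2⟩
          _ ≤ L := fiber_bound n m a y u hind
      · have hempt : (univ.filter (fun B : Lin n m =>
            (∀ i, u i ∈ U.filter (fun x => B x = y)) ∧ LinearIndependent (ZMod 2) u)) = ∅ :=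
          Finset.filter_eq_empty_iff.2 (fun _ _ hP => hind hP.2)
        rw [hempt]
        simp
    · rw [if_neg hU]
      push_neg at hU
      obtain ⟨i, hi⟩ := hU
      have hempt : (univ.filter (fun B : Lin n m =>
          (∀ i, u i ∈ U.filter (fun x => B x = y)) ∧ LinearIndependent (ZMod 2) u)) = ∅ :=
        Finset.filter_eq_empty_iff.2
          (fun _ _ hP => hi (Finset.mem_filter.1 (hP.1 i)).1)
      rw [hempt]
      simp
  have key2 : ∑ u : Fin a → (Fin n → ZMod 2), (if ∀ i, u i ∈ U then L else 0)
      = (2 ^ m) ^ a * L := by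
    rw [Finset.sum_ite, Finset.sum_const, Finset.sum_const_zero, add_zero]
    have hpi : univ.filter (fun u : Fin a → (Fin n → ZMod 2) => ∀ i, u i ∈ U)
        = Fintype.piFinset (fun _ => U) := by
      ext u
      simp [Fintype.mem_piFinset]
    rw [hpi, Fintype.card_piFinset]
    simp [hUcard, smul_eq_mul]
  -- combine
  have hmain' : bad.card * N * (2 ^ m) ^ a ≤ L * (2 ^ m) ^ a := by
    calc bad.card * N * (2 ^ m) ^ a
        ≤ (∑ B ∈ bad, (T B).card) * (2 ^ m) ^ a := by
          apply Nat.mul_le_mul_right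
          calc bad.card * N = ∑ _B ∈ bad, N := by rw [Finset.sum_const, smul_eq_mul]
          _ ≤ ∑ B ∈ bad, (T B).card := Finset.sum_le_sum hbadN
      _ ≤ (∑ B : Lin n m, (T B).card) * (2 ^ m) ^ a := by
          apply Nat.mul_le_mul_right
          exact Finset.sum_le_sum_of_subset (Finset.subset_univ _)
      _ = ∑ u : Fin a → (Fin n → ZMod 2), (univ.filter (fun B : Lin n m =>
            (∀ i, u i ∈ U.filter (fun x => B x = y)) ∧ LinearIndependent (ZMod 2) u)).card
            * (2 ^ m) ^ a := by
          rw [hswap, Finset.sum_mul]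
      _ ≤ ∑ u : Fin a → (Fin n → ZMod 2), (if ∀ i, u i ∈ U then L else 0) :=
          Finset.sum_le_sum (fun u _ => key1 u)
      _ = L * (2 ^ m) ^ a := by rw [key2, mul_comm]
  have hpow_pos : 0 < (2 ^ m) ^ a := by positivity
  have hmain : bad.card * N ≤ L := Nat.le_of_mul_le_mul_right hmain' hpow_pos
  -- real-number estimates
  have hNpos : 0 < N := by
    rw [hNdef]
    apply Finset.prod_pos
    intro k hk
    have hlt : (2:ℕ) ^ k < 2 ^ a :=
      Nat.pow_lt_pow_right (by norm_num) (Finset.mem_range.1 hk)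
    exact Nat.sub_pos_of_lt hlt
  have hNreal : (N : ℝ) = 2 ^ (a ^ 2) * ∏ j ∈ Finset.range a, (1 - (2:ℝ)⁻¹ ^ (j + 1)) := by
    rw [hNdef, Nat.cast_prod]
    have hfac : ∀ k ∈ Finset.range a,
        ((2 ^ a - 2 ^ k : ℕ) : ℝ) = 2 ^ a * (1 - (2:ℝ)⁻¹ ^ (a - k)) := by
      intro k hk
      have hk' := Finset.mem_range.1 hk
      have hle : (2:ℕ) ^ k ≤ 2 ^ a := Nat.pow_le_pow_right (by norm_num) hk'.le
      rw [Nat.cast_sub hle]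
      push_cast
      have h2 : (2:ℝ) ^ a * (2:ℝ)⁻¹ ^ (a - k) = 2 ^ k := by
        rw [inv_pow, mul_inv_eq_iff_eq_mul₀ (by positivity), ← pow_add]
        congr 1
        exact (Nat.add_sub_cancel' hk'.le).symm
      rw [mul_sub, mul_one, h2]
    rw [Finset.prod_congr rfl hfac, Finset.prod_mul_distrib, Finset.prod_const,
      Finset.card_range]
    have hpp : ((2:ℝ) ^ a) ^ a = 2 ^ (a ^ 2) := by rw [← pow_mul, sq]
    rw [hpp]
    congr 1
    rw [← Finset.prod_range_reflect (fun j => 1 - (2:ℝ)⁻¹ ^ (j + 1)) a]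
    apply Finset.prod_congr rfl
    intro k hk
    have hk' := Finset.mem_range.1 hk
    congr 2
    exact (arith1 a k hk').symm
  have hγ := gamma_pos
  have hNge : 2 ^ (a ^ 2) * gammaProd ≤ (N : ℝ) := by
    rw [hNreal]
    exact mul_le_mul_of_nonneg_left (gamma_le_partial' a) (by positivity)
  have hL0 : (0:ℝ) < L := by
    have : 0 < L := Fintype.card_pos_iff.mpr ⟨0⟩
    exact_mod_cast this
  rw [hnum, hden, div_le_iff₀ hL0]
  have h2pos : (0:ℝ) < 2 ^ (a ^ 2) * gammaProd := mul_pos (by positivity) hγ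
  have hstep : (bad.card : ℝ) * (2 ^ (a ^ 2) * gammaProd) ≤ L := by
    calc (bad.card : ℝ) * (2 ^ (a ^ 2) * gammaProd) ≤ (bad.card : ℝ) * N :=
        mul_le_mul_of_nonneg_left hNge (by positivity)
    _ ≤ L := by exact_mod_cast hmain
  calc (bad.card : ℝ) ≤ (L : ℝ) / (2 ^ (a ^ 2) * gammaProd) :=
      (le_div_iff₀ h2pos).mpr hstep
    _ = gammaProd⁻¹ * ((2:ℝ) ^ (a ^ 2))⁻¹ * L := by
      rw [div_eq_mul_inv, mul_inv]
      ring
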